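/- The girth of Λ_{3,3} is 8, and the girth of Λ_{4,3} is at least 10. -/

import Mathlib

/-- Vertices of one side of the graph `Λ(k,q)`: tuples of `k+1` elements of `F`,
modelled as functions `ℕ → F` vanishing above index `k`. -/
abbrev PVec (F : Type*) [Zero F] (k : ℕ) : Type _ := {f : ℕ → F // ∀ i, k < i → f i = 0}

/-- Adjacency condition between a left vertex `[l]` (with `l 1 = l 2`) and a right
vertex `⟨r⟩` (with `r 1 = 0`) in `Λ(k,q)`: for `2 ≤ i ≤ k`,
`l i + r i = r 0 * l (i-2)` if `i ≡ 2, 3 (mod 4)` and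
`l i + r i = l 0 * r (i-2)` if `i ≡ 0, 1 (mod 4)`. -/
def lamAdjLR {F : Type*} [Field F] (k : ℕ) (l r : ℕ → F) : Prop :=
  l 1 = l 2 ∧ r 1 = 0 ∧ ∀ i, 2 ≤ i → i ≤ k →
    ((i % 4 = 2 ∨ i % 4 = 3) → l i + r i = r 0 * l (i - 2)) ∧
    ((i % 4 = 0 ∨ i % 4 = 1) → l i + r i = l 0 * r (i - 2))

/-- The bipartite graph `Λ(k,q)` (the graph `Λ_{k,q}` of the paper, isomorphic to `D(k,q)`). -/
def LambdaGraph (F : Type*) [Field F] (k : ℕ) : SimpleGraph (PVec F k ⊕ PVec F k) where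
  Adj x y := match x, y with
    | Sum.inl l, Sum.inr r => lamAdjLR k l.1 r.1
    | Sum.inr r, Sum.inl l => lamAdjLR k l.1 r.1
    | _, _ => False
  symm := ⟨by rintro (l | r) (l' | r') h <;> exact h⟩
  loopless := ⟨by rintro (l | r) h <;> exact h⟩

namespace LamAux

open SimpleGraph Walk Sum

abbrev F3 := ZMod 3
abbrev V (k : ℕ) := PVec F3 k ⊕ PVec F3 k
abbrev G (k : ℕ) : SimpleGraph (V k) := LambdaGraph F3 k

instance {k : ℕ} : DecidableEq (PVec F3 k) := fun x y =>
  decidable_of_iff (∀ i : Fin (k+1), x.1 i = y.1 i) (by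
    constructor
    · intro h
      apply Subtype.ext; funext i
      rcases le_or_gt i k with hi | hi
      · exact h ⟨i, by omega⟩
      · rw [x.2 i hi, y.2 i hi]
    · intro h i; rw [h])

lemma adj_inl {k} {l : PVec F3 k} {y : V k} (h : (G k).Adj (inl l) y) :
    ∃ r, y = inr r ∧ lamAdjLR k l.1 r.1 := by
  cases y with
  | inl l' => exact False.elim h
  | inr r => exact ⟨r, rfl, h⟩

lemma adj_inr {k} {r : PVec F3 k} {y : V k} (h : (G k).Adj (inr r) y) :
    ∃ l, y = inl l ∧ lamAdjLR k l.1 r.1 := by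
  cases y with
  | inl l => exact ⟨l, rfl, h⟩
  | inr r' => exact False.elim h

lemma adj_isLeft {k} {x y : V k} (h : (G k).Adj x y) : x.isLeft = !y.isLeft := by
  cases x <;> cases y
  · exact False.elim h
  · rfl
  · rfl
  · exact False.elim h

lemma walk_parity {k} : ∀ {x y : V k} (w : (G k).Walk x y),
    (x.isLeft = y.isLeft) ↔ Even w.length := by
  intro x y w
  induction w with
  | nil => simp
  | @cons x m y h p ih =>
    rw [Walk.length_cons, Nat.even_add_one, ← ih, adj_isLeft h]
    cases m.isLeft <;> cases y.isLeft <;> simp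

lemma even_closed {k} {x : V k} (w : (G k).Walk x x) : Even w.length :=
  (walk_parity w).mp rfl

/-- A left vertex is determined by a common right neighbour and its 0-th coordinate. -/
lemma left_unique {k} (hk : 2 ≤ k) {l l' r : PVec F3 k}
    (h : lamAdjLR k l.1 r.1) (h' : lamAdjLR k l'.1 r.1) (h0 : l.1 0 = l'.1 0) : l = l' := by
  obtain ⟨h1, _, h3⟩ := h
  obtain ⟨h1', _, h3'⟩ := h'
  have key : ∀ i, l.1 i = l'.1 i := by
    intro i
    induction i using Nat.strong_induction_on with
    | _ i ih =>
      have two : l.1 2 = l'.1 2 := by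
        have e := (h3 2 (by omega) hk).1 (Or.inl rfl)
        have e' := (h3' 2 (by omega) hk).1 (Or.inl rfl)
        norm_num at e e'
        linear_combination e - e' + (r.1 0) * h0
      match i, ih with
      | 0, _ => exact h0
      | 1, _ => rw [h1, h1']; exact two
      | 2, _ => exact two
      | (n+3), ih =>
        rcases le_or_gt (n+3) k with hik | hik
        · have e := h3 (n+3) (by omega) hik
          have e' := h3' (n+3) (by omega) hik
          have hprev : l.1 (n+1) = l'.1 (n+1) := ih (n+1) (by omega)
          have hm : (n+3) % 4 = 0 ∨ (n+3) % 4 = 1 ∨ (n+3) % 4 = 2 ∨ (n+3) % 4 = 3 := by omega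
          have hsub : n + 3 - 2 = n + 1 := by omega
          rcases hm with hm | hm | hm | hm
          · have q := e.2 (Or.inl hm); have q' := e'.2 (Or.inl hm)
            rw [hsub] at q q'
            linear_combination q - q' + (r.1 (n+1)) * h0
          · have q := e.2 (Or.inr hm); have q' := e'.2 (Or.inr hm)
            rw [hsub] at q q'
            linear_combination q - q' + (r.1 (n+1)) * h0
          · have q := e.1 (Or.inl hm); have q' := e'.1 (Or.inl hm)
            rw [hsub] at q q'
            linear_combination q - q' + (r.1 0) * hprev
          · have q := e.1 (Or.inr hm); have q' := e'.1 (Or.inr hm)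
            rw [hsub] at q q'
            linear_combination q - q' + (r.1 0) * hprev
        · rw [l.2 _ hik, l'.2 _ hik]
  exact Subtype.ext (funext key)

/-- A right vertex is determined by a common left neighbour and its 0-th coordinate. -/
lemma right_unique {k} {l r r' : PVec F3 k}
    (h : lamAdjLR k l.1 r.1) (h' : lamAdjLR k l.1 r'.1) (h0 : r.1 0 = r'.1 0) : r = r' := by
  obtain ⟨_, h2, h3⟩ := h
  obtain ⟨_, h2', h3'⟩ := h'
  have key : ∀ i, r.1 i = r'.1 i := by
    intro i
    induction i using Nat.strong_induction_on with
    | _ i ih =>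
      match i, ih with
      | 0, _ => exact h0
      | 1, _ => rw [h2, h2']
      | (n+2), ih =>
        rcases le_or_gt (n+2) k with hik | hik
        · have e := h3 (n+2) (by omega) hik
          have e' := h3' (n+2) (by omega) hik
          have hprev : r.1 n = r'.1 n := ih n (by omega)
          have hm : (n+2) % 4 = 0 ∨ (n+2) % 4 = 1 ∨ (n+2) % 4 = 2 ∨ (n+2) % 4 = 3 := by omega
          have hsub : n + 2 - 2 = n := by omega
          rcases hm with hm | hm | hm | hm
          · have q := e.2 (Or.inl hm); have q' := e'.2 (Or.inl hm)
            rw [hsub] at q q'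
            linear_combination q - q' + (l.1 0) * hprev
          · have q := e.2 (Or.inr hm); have q' := e'.2 (Or.inr hm)
            rw [hsub] at q q'
            linear_combination q - q' + (l.1 0) * hprev
          · have q := e.1 (Or.inl hm); have q' := e'.1 (Or.inl hm)
            rw [hsub] at q q'
            linear_combination q - q' + (l.1 (n)) * h0
          · have q := e.1 (Or.inr hm); have q' := e'.1 (Or.inr hm)
            rw [hsub] at q q'
            linear_combination q - q' + (l.1 (n)) * h0
        · rw [r.2 _ hik, r'.2 _ hik]
  exact Subtype.ext (funext key)

lemma support_getD {k} {u v : V k} (w : (G k).Walk u v) :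
    ∀ (i : ℕ) (d : V k), i ≤ w.length → w.getVert i = w.support.getD i d := by
  induction w with
  | nil =>
    intro i d hi
    simp only [Walk.length_nil, Nat.le_zero] at hi
    subst hi
    rfl
  | @cons x m y h p ih =>
    intro i d hi
    cases i with
    | zero => simp [Walk.getVert_zero, Walk.support_cons]
    | succ n =>
      rw [Walk.getVert_cons_succ, Walk.support_cons, List.getD_cons_succ]
      exact ih n d (by simpa using hi)

lemma cyc_ne {k} {v : V k} {w : (G k).Walk v v} (hc : w.IsCycle) {i j : ℕ}
    (h1 : 1 ≤ i) (hij : i < j) (hj : j ≤ w.length) : w.getVert i ≠ w.getVert j := by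
  have hnd : w.support.tail.Nodup := ((Walk.isCycle_def w).mp hc).2.2
  have hlen : w.support.tail.length = w.length := by
    have := w.length_support
    simp [List.length_tail, this]
  have hi' : i - 1 < w.support.tail.length := by omega
  have hj' : j - 1 < w.support.tail.length := by omega
  have gets : ∀ m, 1 ≤ m → m ≤ w.length → ∀ (hm : m - 1 < w.support.tail.length),
      w.getVert m = w.support.tail[m-1] := by
    intro m h1m hm hmlt
    rw [support_getD w m v hm]
    conv_lhs => rw [w.support_eq_cons]
    obtain ⟨m', rfl⟩ : ∃ m', m = m' + 1 := ⟨m - 1, by omega⟩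
    rw [List.getD_cons_succ, List.getD_eq_getElem _ _ (by omega)]
    simp only [Nat.add_sub_cancel]
  intro heq
  rw [gets i h1 (by omega) hi', gets j (by omega) hj hj'] at heq
  have := (hnd.getElem_inj_iff (hi := hi') (hj := hj')).mp heq
  omega

/-- Any cycle either starts at a left vertex or can be rotated to one. -/
lemma to_inl {k n : ℕ} (h : ∀ (l : PVec F3 k) (w : (G k).Walk (inl l) (inl l)),
      w.IsCycle → w.length ≠ n) :
    ∀ {v : V k} (w : (G k).Walk v v), w.IsCycle → w.length ≠ n := by
  intro v w hc hl
  cases v with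
  | inl l => exact h l w hc hl
  | inr r =>
    have hpos : 0 < w.length := by have := hc.three_le_length; omega
    have hadj := w.adj_getVert_succ (i := 0) hpos
    rw [w.getVert_zero] at hadj
    obtain ⟨l, hl', -⟩ := adj_inr hadj
    have hmem : inl l ∈ w.support :=
      Walk.mem_support_iff_exists_getVert.2 ⟨1, hl', by omega⟩
    have hlen : (w.rotate (inl l) hmem).length = w.length := by
      rw [← Walk.length_darts, ← Walk.length_darts]
      exact (w.rotate_darts (inl l) hmem).perm.length_eq
    exact h l (w.rotate (inl l) hmem) (hc.rotate hmem) (hlen.trans hl)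

lemma noSol2 : ∀ a1 a2 b1 b2 : F3, ¬(a1 ≠ a2 ∧ b1 ≠ b2 ∧
    b1 * (a2 - a1) + b2 * (a1 - a2) = 0) := by decide

lemma noSol3 : ∀ a1 a2 a3 b1 b2 b3 : F3, ¬(a1 ≠ a2 ∧ a2 ≠ a3 ∧ a3 ≠ a1 ∧
    b1 ≠ b2 ∧ b2 ≠ b3 ∧ b3 ≠ b1 ∧
    b1 * (a2 - a1) + b2 * (a3 - a2) + b3 * (a1 - a3) = 0 ∧
    b1 * b1 * (a2 - a1) + b2 * b2 * (a3 - a2) + b3 * b3 * (a1 - a3) = 0) := by decide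

lemma noSol4 : ∀ a1 a2 a3 a4 b1 b2 b3 b4 : F3, ¬(a1 ≠ a2 ∧ a2 ≠ a3 ∧ a3 ≠ a4 ∧ a4 ≠ a1 ∧
    b1 ≠ b2 ∧ b2 ≠ b3 ∧ b3 ≠ b4 ∧ b4 ≠ b1 ∧
    b1 * (a2 - a1) + b2 * (a3 - a2) + b3 * (a4 - a3) + b4 * (a1 - a4) = 0 ∧
    b1 * b1 * (a2 - a1) + b2 * b2 * (a3 - a2) + b3 * b3 * (a4 - a3)
      + b4 * b4 * (a1 - a4) = 0 ∧
    (a2 - a1) * (b1 * a1) + (a3 - a2) * (b2 * a2 - b1 * (a2 - a1))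
      + (a4 - a3) * (b3 * a3 - (b1 * (a2 - a1) + b2 * (a3 - a2)))
      + (a1 - a4) * (b4 * a4 - (b1 * (a2 - a1) + b2 * (a3 - a2) + b3 * (a4 - a3))) = 0) := by
  decide

lemma no4 {k} (hk : 2 ≤ k) : ∀ {v : V k} (w : (G k).Walk v v), w.IsCycle → w.length ≠ 4 := by
  apply to_inl
  intro x1 w hc hlen
  have g0 : w.getVert 0 = inl x1 := w.getVert_zero
  have gN : w.getVert 4 = inl x1 := by rw [← hlen]; exact w.getVert_length
  have A0 := w.adj_getVert_succ (i := 0) (by omega)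
  rw [g0] at A0
  obtain ⟨y1, e1, h11⟩ := adj_inl A0
  have A1 := w.adj_getVert_succ (i := 1) (by omega)
  rw [e1] at A1
  obtain ⟨x2, e2, h21⟩ := adj_inr A1
  have A2 := w.adj_getVert_succ (i := 2) (by omega)
  rw [e2] at A2
  obtain ⟨y2, e3, h22⟩ := adj_inl A2
  have A3 := w.adj_getVert_succ (i := 3) (by omega)
  rw [e3, gN] at A3
  have h12 : lamAdjLR k x1.1 y2.1 := A3
  have dx : x1 ≠ x2 := by
    have := cyc_ne hc (i := 2) (j := 4) (by omega) (by omega) (by omega)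
    rw [e2, gN] at this
    simpa [eq_comm] using this
  have dy : y1 ≠ y2 := by
    have := cyc_ne hc (i := 1) (j := 3) (by omega) (by omega) (by omega)
    rw [e1, e3] at this
    simpa using this
  have da : x1.1 0 ≠ x2.1 0 := fun h0 => dx (left_unique hk h11 h21 h0)
  have db : y1.1 0 ≠ y2.1 0 := fun h0 => dy (right_unique h11 h12 h0)
  have e11 := (h11.2.2 2 (by omega) hk).1 (Or.inl rfl)
  have e21 := (h21.2.2 2 (by omega) hk).1 (Or.inl rfl)
  have e22 := (h22.2.2 2 (by omega) hk).1 (Or.inl rfl)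
  have e12 := (h12.2.2 2 (by omega) hk).1 (Or.inl rfl)
  norm_num at e11 e21 e22 e12
  exact noSol2 (x1.1 0) (x2.1 0) (y1.1 0) (y2.1 0)
    ⟨da, db, by linear_combination (e11 - e21) + (e22 - e12)⟩

lemma no6 {k} (hk : 3 ≤ k) : ∀ {v : V k} (w : (G k).Walk v v), w.IsCycle → w.length ≠ 6 := by
  have hk2 : 2 ≤ k := by omega
  apply to_inl
  intro x1 w hc hlen
  have g0 : w.getVert 0 = inl x1 := w.getVert_zero
  have gN : w.getVert 6 = inl x1 := by rw [← hlen]; exact w.getVert_length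
  have A0 := w.adj_getVert_succ (i := 0) (by omega)
  rw [g0] at A0
  obtain ⟨y1, e1, h11⟩ := adj_inl A0
  have A1 := w.adj_getVert_succ (i := 1) (by omega)
  rw [e1] at A1
  obtain ⟨x2, e2, h21⟩ := adj_inr A1
  have A2 := w.adj_getVert_succ (i := 2) (by omega)
  rw [e2] at A2
  obtain ⟨y2, e3, h22⟩ := adj_inl A2
  have A3 := w.adj_getVert_succ (i := 3) (by omega)
  rw [e3] at A3
  obtain ⟨x3, e4, h32⟩ := adj_inr A3
  have A4 := w.adj_getVert_succ (i := 4) (by omega)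
  rw [e4] at A4
  obtain ⟨y3, e5, h33⟩ := adj_inl A4
  have A5 := w.adj_getVert_succ (i := 5) (by omega)
  rw [e5, gN] at A5
  have h13 : lamAdjLR k x1.1 y3.1 := A5
  have dx12 : x1 ≠ x2 := by
    have := cyc_ne hc (i := 2) (j := 6) (by omega) (by omega) (by omega)
    rw [e2, gN] at this
    simpa [eq_comm] using this
  have dx23 : x2 ≠ x3 := by
    have := cyc_ne hc (i := 2) (j := 4) (by omega) (by omega) (by omega)
    rw [e2, e4] at this
    simpa using this
  have dx31 : x3 ≠ x1 := by
    have := cyc_ne hc (i := 4) (j := 6) (by omega) (by omega) (by omega)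
    rw [e4, gN] at this
    simpa using this
  have dy12 : y1 ≠ y2 := by
    have := cyc_ne hc (i := 1) (j := 3) (by omega) (by omega) (by omega)
    rw [e1, e3] at this
    simpa using this
  have dy23 : y2 ≠ y3 := by
    have := cyc_ne hc (i := 3) (j := 5) (by omega) (by omega) (by omega)
    rw [e3, e5] at this
    simpa using this
  have dy31 : y3 ≠ y1 := by
    have := cyc_ne hc (i := 1) (j := 5) (by omega) (by omega) (by omega)
    rw [e1, e5] at this
    simpa [eq_comm] using this
  have da12 : x1.1 0 ≠ x2.1 0 := fun h0 => dx12 (left_unique hk2 h11 h21 h0)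
  have da23 : x2.1 0 ≠ x3.1 0 := fun h0 => dx23 (left_unique hk2 h22 h32 h0)
  have da31 : x3.1 0 ≠ x1.1 0 := fun h0 => dx31 (left_unique hk2 h33 h13 h0)
  have db12 : y1.1 0 ≠ y2.1 0 := fun h0 => dy12 (right_unique h21 h22 h0)
  have db23 : y2.1 0 ≠ y3.1 0 := fun h0 => dy23 (right_unique h32 h33 h0)
  have db31 : y3.1 0 ≠ y1.1 0 := fun h0 => dy31 (right_unique h13 h11 h0)
  have e11 := (h11.2.2 2 (by omega) hk2).1 (Or.inl rfl)
  have e21 := (h21.2.2 2 (by omega) hk2).1 (Or.inl rfl)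
  have e22 := (h22.2.2 2 (by omega) hk2).1 (Or.inl rfl)
  have e32 := (h32.2.2 2 (by omega) hk2).1 (Or.inl rfl)
  have e33 := (h33.2.2 2 (by omega) hk2).1 (Or.inl rfl)
  have e13 := (h13.2.2 2 (by omega) hk2).1 (Or.inl rfl)
  have f11 := (h11.2.2 3 (by omega) hk).1 (Or.inr rfl)
  have f21 := (h21.2.2 3 (by omega) hk).1 (Or.inr rfl)
  have f22 := (h22.2.2 3 (by omega) hk).1 (Or.inr rfl)
  have f32 := (h32.2.2 3 (by omega) hk).1 (Or.inr rfl)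
  have f33 := (h33.2.2 3 (by omega) hk).1 (Or.inr rfl)
  have f13 := (h13.2.2 3 (by omega) hk).1 (Or.inr rfl)
  have g1 := h11.1
  have g2 := h21.1
  have g3 := h32.1
  norm_num at e11 e21 e22 e32 e33 e13 f11 f21 f22 f32 f33 f13
  refine noSol3 (x1.1 0) (x2.1 0) (x3.1 0) (y1.1 0) (y2.1 0) (y3.1 0)
    ⟨da12, da23, da31, db12, db23, db31, ?_, ?_⟩
  · linear_combination (e11 - e21) + (e22 - e32) + (e33 - e13)
  · linear_combination (f11 - f21) + (y1.1 0) * (e11 - e21) + (y1.1 0) * (g1 - g2)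
      + (f22 - f32) + (y2.1 0) * (e22 - e32) + (y2.1 0) * (g2 - g3)
      + (f33 - f13) + (y3.1 0) * (e33 - e13) + (y3.1 0) * (g3 - g1)

lemma no8 {k} (hk : 4 ≤ k) : ∀ {v : V k} (w : (G k).Walk v v), w.IsCycle → w.length ≠ 8 := by
  have hk2 : 2 ≤ k := by omega
  have hk3 : 3 ≤ k := by omega
  apply to_inl
  intro x1 w hc hlen
  have g0 : w.getVert 0 = inl x1 := w.getVert_zero
  have gN : w.getVert 8 = inl x1 := by rw [← hlen]; exact w.getVert_length
  have A0 := w.adj_getVert_succ (i := 0) (by omega)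
  rw [g0] at A0
  obtain ⟨y1, e1, h11⟩ := adj_inl A0
  have A1 := w.adj_getVert_succ (i := 1) (by omega)
  rw [e1] at A1
  obtain ⟨x2, e2, h21⟩ := adj_inr A1
  have A2 := w.adj_getVert_succ (i := 2) (by omega)
  rw [e2] at A2
  obtain ⟨y2, e3, h22⟩ := adj_inl A2
  have A3 := w.adj_getVert_succ (i := 3) (by omega)
  rw [e3] at A3
  obtain ⟨x3, e4, h32⟩ := adj_inr A3
  have A4 := w.adj_getVert_succ (i := 4) (by omega)
  rw [e4] at A4
  obtain ⟨y3, e5, h33⟩ := adj_inl A4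
  have A5 := w.adj_getVert_succ (i := 5) (by omega)
  rw [e5] at A5
  obtain ⟨x4, e6, h43⟩ := adj_inr A5
  have A6 := w.adj_getVert_succ (i := 6) (by omega)
  rw [e6] at A6
  obtain ⟨y4, e7, h44⟩ := adj_inl A6
  have A7 := w.adj_getVert_succ (i := 7) (by omega)
  rw [e7, gN] at A7
  have h14 : lamAdjLR k x1.1 y4.1 := A7
  have dx12 : x1 ≠ x2 := by
    have := cyc_ne hc (i := 2) (j := 8) (by omega) (by omega) (by omega)
    rw [e2, gN] at this
    simpa [eq_comm] using this
  have dx23 : x2 ≠ x3 := by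
    have := cyc_ne hc (i := 2) (j := 4) (by omega) (by omega) (by omega)
    rw [e2, e4] at this
    simpa using this
  have dx34 : x3 ≠ x4 := by
    have := cyc_ne hc (i := 4) (j := 6) (by omega) (by omega) (by omega)
    rw [e4, e6] at this
    simpa using this
  have dx41 : x4 ≠ x1 := by
    have := cyc_ne hc (i := 6) (j := 8) (by omega) (by omega) (by omega)
    rw [e6, gN] at this
    simpa using this
  have dy12 : y1 ≠ y2 := by
    have := cyc_ne hc (i := 1) (j := 3) (by omega) (by omega) (by omega)
    rw [e1, e3] at this
    simpa using this
  have dy23 : y2 ≠ y3 := by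
    have := cyc_ne hc (i := 3) (j := 5) (by omega) (by omega) (by omega)
    rw [e3, e5] at this
    simpa using this
  have dy34 : y3 ≠ y4 := by
    have := cyc_ne hc (i := 5) (j := 7) (by omega) (by omega) (by omega)
    rw [e5, e7] at this
    simpa using this
  have dy41 : y4 ≠ y1 := by
    have := cyc_ne hc (i := 1) (j := 7) (by omega) (by omega) (by omega)
    rw [e1, e7] at this
    simpa [eq_comm] using this
  have da12 : x1.1 0 ≠ x2.1 0 := fun h0 => dx12 (left_unique hk2 h11 h21 h0)
  have da23 : x2.1 0 ≠ x3.1 0 := fun h0 => dx23 (left_unique hk2 h22 h32 h0)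
  have da34 : x3.1 0 ≠ x4.1 0 := fun h0 => dx34 (left_unique hk2 h33 h43 h0)
  have da41 : x4.1 0 ≠ x1.1 0 := fun h0 => dx41 (left_unique hk2 h44 h14 h0)
  have db12 : y1.1 0 ≠ y2.1 0 := fun h0 => dy12 (right_unique h21 h22 h0)
  have db23 : y2.1 0 ≠ y3.1 0 := fun h0 => dy23 (right_unique h32 h33 h0)
  have db34 : y3.1 0 ≠ y4.1 0 := fun h0 => dy34 (right_unique h43 h44 h0)
  have db41 : y4.1 0 ≠ y1.1 0 := fun h0 => dy41 (right_unique h14 h11 h0)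
  have e11 := (h11.2.2 2 (by omega) hk2).1 (Or.inl rfl)
  have e21 := (h21.2.2 2 (by omega) hk2).1 (Or.inl rfl)
  have e22 := (h22.2.2 2 (by omega) hk2).1 (Or.inl rfl)
  have e32 := (h32.2.2 2 (by omega) hk2).1 (Or.inl rfl)
  have e33 := (h33.2.2 2 (by omega) hk2).1 (Or.inl rfl)
  have e43 := (h43.2.2 2 (by omega) hk2).1 (Or.inl rfl)
  have e44 := (h44.2.2 2 (by omega) hk2).1 (Or.inl rfl)
  have e14 := (h14.2.2 2 (by omega) hk2).1 (Or.inl rfl)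
  have f11 := (h11.2.2 3 (by omega) hk3).1 (Or.inr rfl)
  have f21 := (h21.2.2 3 (by omega) hk3).1 (Or.inr rfl)
  have f22 := (h22.2.2 3 (by omega) hk3).1 (Or.inr rfl)
  have f32 := (h32.2.2 3 (by omega) hk3).1 (Or.inr rfl)
  have f33 := (h33.2.2 3 (by omega) hk3).1 (Or.inr rfl)
  have f43 := (h43.2.2 3 (by omega) hk3).1 (Or.inr rfl)
  have f44 := (h44.2.2 3 (by omega) hk3).1 (Or.inr rfl)
  have f14 := (h14.2.2 3 (by omega) hk3).1 (Or.inr rfl)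
  have q11 := (h11.2.2 4 (by omega) hk).2 (Or.inl rfl)
  have q21 := (h21.2.2 4 (by omega) hk).2 (Or.inl rfl)
  have q22 := (h22.2.2 4 (by omega) hk).2 (Or.inl rfl)
  have q32 := (h32.2.2 4 (by omega) hk).2 (Or.inl rfl)
  have q33 := (h33.2.2 4 (by omega) hk).2 (Or.inl rfl)
  have q43 := (h43.2.2 4 (by omega) hk).2 (Or.inl rfl)
  have q44 := (h44.2.2 4 (by omega) hk).2 (Or.inl rfl)
  have q14 := (h14.2.2 4 (by omega) hk).2 (Or.inl rfl)
  have g1 := h11.1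
  have g2 := h21.1
  have g3 := h32.1
  have g4 := h43.1
  norm_num at e11 e21 e22 e32 e33 e43 e44 e14 f11 f21 f22 f32 f33 f43 f44 f14
  norm_num at q11 q21 q22 q32 q33 q43 q44 q14
  refine noSol4 (x1.1 0) (x2.1 0) (x3.1 0) (x4.1 0) (y1.1 0) (y2.1 0) (y3.1 0) (y4.1 0)
    ⟨da12, da23, da34, da41, db12, db23, db34, db41, ?_, ?_, ?_⟩
  · linear_combination (e11 - e21) + (e22 - e32) + (e33 - e43) + (e44 - e14)
  · linear_combination (f11 - f21) + (y1.1 0) * (e11 - e21) + (y1.1 0) * (g1 - g2)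
      + (f22 - f32) + (y2.1 0) * (e22 - e32) + (y2.1 0) * (g2 - g3)
      + (f33 - f43) + (y3.1 0) * (e33 - e43) + (y3.1 0) * (g3 - g4)
      + (f44 - f14) + (y4.1 0) * (e44 - e14) + (y4.1 0) * (g4 - g1)
  · linear_combination (q11 - q21) + (q22 - q32) + (q33 - q43) + (q44 - q14)
      - (x2.1 0 - x1.1 0) * e11 - (x3.1 0 - x2.1 0) * e22
      - (x4.1 0 - x3.1 0) * e33 - (x1.1 0 - x4.1 0) * e44
      + (x1.1 0 - x2.1 0) * (e21 - e11) + (x1.1 0 - x3.1 0) * (e32 - e22)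
      + (x1.1 0 - x4.1 0) * (e43 - e33)

/-! ### The explicit 8-cycle in `Λ(3,3)` -/

def mkv (c0 c1 c2 c3 : F3) : PVec F3 3 :=
  ⟨fun i => if i = 0 then c0 else if i = 1 then c1 else if i = 2 then c2 else
      if i = 3 then c3 else 0, by
    intro i hi
    simp only [if_neg (show ¬i = 0 by omega), if_neg (show ¬i = 1 by omega),
      if_neg (show ¬i = 2 by omega), if_neg (show ¬i = 3 by omega)]⟩

lemma lamAdj3_iff (l r : ℕ → F3) : lamAdjLR 3 l r ↔
    (l 1 = l 2 ∧ r 1 = 0 ∧ l 2 + r 2 = r 0 * l 0 ∧ l 3 + r 3 = r 0 * l 1) := by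
  constructor
  · rintro ⟨h1, h2, h3⟩
    refine ⟨h1, h2, ?_, ?_⟩
    · simpa using (h3 2 (by omega) (by omega)).1 (Or.inl rfl)
    · simpa using (h3 3 (by omega) (by omega)).1 (Or.inr rfl)
  · rintro ⟨h1, h2, h3, h4⟩
    refine ⟨h1, h2, ?_⟩
    intro i hi hik
    interval_cases i
    · exact ⟨fun _ => h3, fun h => absurd h (by decide)⟩
    · exact ⟨fun _ => h4, fun h => absurd h (by decide)⟩

def L1 : PVec F3 3 := mkv 0 0 0 0
def R1 : PVec F3 3 := mkv 0 0 0 0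
def L2 : PVec F3 3 := mkv 1 0 0 0
def R2 : PVec F3 3 := mkv 1 0 1 0
def L3 : PVec F3 3 := mkv 0 2 2 2
def R3 : PVec F3 3 := mkv 0 0 1 1
def L4 : PVec F3 3 := mkv 2 2 2 2
def R4 : PVec F3 3 := mkv 1 0 0 0

lemma adjLR {l r : PVec F3 3} (h : lamAdjLR 3 l.1 r.1) : (G 3).Adj (inl l) (inr r) := h
lemma adjRL {l r : PVec F3 3} (h : lamAdjLR 3 l.1 r.1) : (G 3).Adj (inr r) (inl l) := h

def c8 : (G 3).Walk (inl L1) (inl L1) :=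
  .cons (adjLR (r := R1) (by rw [lamAdj3_iff]; decide))
  (.cons (adjRL (l := L2) (by rw [lamAdj3_iff]; decide))
  (.cons (adjLR (r := R2) (by rw [lamAdj3_iff]; decide))
  (.cons (adjRL (l := L3) (by rw [lamAdj3_iff]; decide))
  (.cons (adjLR (r := R3) (by rw [lamAdj3_iff]; decide))
  (.cons (adjRL (l := L4) (by rw [lamAdj3_iff]; decide))
  (.cons (adjLR (r := R4) (by rw [lamAdj3_iff]; decide))
  (.cons (adjRL (l := L1) (by rw [lamAdj3_iff]; decide)) .nil)))))))

lemma c8_isCycle : c8.IsCycle := by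
  rw [Walk.isCycle_def, Walk.isTrail_def]
  refine ⟨by decide, by simp [c8], by decide⟩

lemma c8_length : c8.length = 8 := rfl

end LamAux


/-- The girth of `Λ(3,3)` is 8 and the girth of `Λ(4,3)` is at least 10. -/
theorem lambda33_lambda43_girth :
    (LambdaGraph (ZMod 3) 3).egirth = 8 ∧ 10 ≤ (LambdaGraph (ZMod 3) 4).egirth := by
  open LamAux in
  constructor
  · refine le_antisymm ?_ ?_
    · have h1 : (G 3).egirth ≤ (c8.length : ℕ∞) := by
        rw [SimpleGraph.egirth]
        exact iInf_le_of_le _ (iInf_le_of_le c8 (iInf_le_of_le c8_isCycle le_rfl))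
      rw [c8_length] at h1
      exact_mod_cast h1
    · rw [SimpleGraph.le_egirth]
      intro a w hw
      have h3 := hw.three_le_length
      obtain ⟨m, hm⟩ := even_closed w
      have h4 := no4 (k := 3) (by omega) w hw
      have h6 := no6 (k := 3) (by omega) w hw
      have h8 : 8 ≤ w.length := by omega
      exact_mod_cast Nat.cast_le.mpr h8
  · rw [SimpleGraph.le_egirth]
    intro a w hw
    have h3 := hw.three_le_length
    obtain ⟨m, hm⟩ := even_closed w
    have h4 := no4 (k := 4) (by omega) w hw
    have h6 := no6 (k := 4) (by omega) w hw
    have h8 := no8 (k := 4) (by omega) w hw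
    have h10 : 10 ≤ w.length := by omega
    exact_mod_cast Nat.cast_le.mpr h10
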